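/- Let T be a tree on the vertex set {0,1,…,n}, let a'_{ij} ∈ ℂ be nonzero for every ordered pair (i,j) with {i,j} an edge of T, and let ω_1,…,ω_n ∈ ℂ. Then the set {x ∈ (ℂ*)^n : ω_i − Σ_{j ∈ N_T(i)} a'_{ij}(x_i/x_j − x_j/x_i) = 0 for all i = 1,…,n} (with x_0 = 1) has at most 2^n elements. -/

import Mathlib

open SimpleGraph Walk

variable {V : Type*} [Fintype V] [DecidableEq V] {T : SimpleGraph V}

lemma my_isPath_concat {u v w : V} {p : T.Walk u v} (hp : p.IsPath) (h : T.Adj v w)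
    (hw : w ∉ p.support) : (p.concat h).IsPath := by
  rw [← Walk.isPath_reverse_iff, Walk.reverse_concat]
  exact (hp.reverse).cons (by simpa using hw)

lemma exists_leaf (hT : T.IsTree) (v0 : V) (h1 : ∃ v : V, v ≠ v0) :
    ∃ ℓ, ℓ ≠ v0 ∧ ∃ j₀, T.neighborSet ℓ = {j₀} := by
  obtain ⟨v1, hv1⟩ := h1
  have hconn : T.Connected := hT.isConnected
  obtain ⟨ℓ, -, hmax⟩ := Finset.exists_max_image Finset.univ (T.dist v0) ⟨v1, Finset.mem_univ v1⟩
  have hd1 : 0 < T.dist v0 v1 := hconn.pos_dist_of_ne (Ne.symm hv1)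
  have hdℓ : 0 < T.dist v0 ℓ := lt_of_lt_of_le hd1 (hmax v1 (Finset.mem_univ v1))
  have hℓ0 : ℓ ≠ v0 := by
    rintro rfl
    simp [SimpleGraph.dist_self] at hdℓ
  refine ⟨ℓ, hℓ0, ?_⟩
  -- there exists a neighbor
  obtain ⟨q⟩ := hconn ℓ v0
  have hq : ¬ q.Nil := Walk.not_nil_of_ne hℓ0
  refine ⟨q.getVert 1, ?_⟩
  have hadj0 : T.Adj ℓ (q.getVert 1) := q.adj_snd hq
  -- key : any two neighbors are equal
  have key : ∀ w₁ w₂, T.Adj ℓ w₁ → T.Adj ℓ w₂ → w₁ = w₂ := by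
    have build : ∀ w, T.Adj ℓ w → ∃ P : T.Walk v0 ℓ, P.IsPath ∧
        P.support.getLast (by simp) = ℓ ∧
        ∃ (Q : T.Walk v0 w), P.support = Q.support ++ [ℓ] := by
      intro w hw
      obtain ⟨Q, hQp, hQl⟩ := hconn.exists_path_of_dist v0 w
      have hℓQ : ℓ ∉ Q.support := by
        intro hmem
        have hsplit := Q.take_spec hmem
        have hlen : (Q.takeUntil ℓ hmem).length + (Q.dropUntil ℓ hmem).length = Q.length := by
          rw [← Walk.length_append, hsplit]
        have h1 : T.dist v0 ℓ ≤ (Q.takeUntil ℓ hmem).length := SimpleGraph.dist_le _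
        have h2 : Q.length = T.dist v0 w := hQl
        have h3 : T.dist v0 w ≤ T.dist v0 ℓ := hmax w (Finset.mem_univ w)
        have h4 : (Q.dropUntil ℓ hmem).length = 0 := by omega
        have := Walk.eq_of_length_eq_zero h4
        exact (T.ne_of_adj hw) this
      refine ⟨Q.concat hw.symm, my_isPath_concat hQp hw.symm hℓQ, Walk.getLast_support _, Q, ?_⟩
      rw [Walk.support_concat]
    intro w₁ w₂ h₁ h₂
    obtain ⟨P₁, hP₁, -, Q₁, hs₁⟩ := build w₁ h₁
    obtain ⟨P₂, hP₂, -, Q₂, hs₂⟩ := build w₂ h₂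
    have huniq := hT.existsUnique_path v0 ℓ
    have : P₁ = P₂ := huniq.unique hP₁ hP₂
    have hsup : Q₁.support ++ [ℓ] = Q₂.support ++ [ℓ] := by rw [← hs₁, ← hs₂, this]
    have hQQ : Q₁.support = Q₂.support := by
      have := List.append_left_injective [ℓ] hsup
      exact this
    have e1 : Q₁.support.getLast (by simp) = w₁ := Walk.getLast_support _
    have e2 : Q₂.support.getLast (by simp) = w₂ := Walk.getLast_support _
    rw [← e1, ← e2]
    congr 1
  ext w
  simp only [SimpleGraph.mem_neighborSet, Set.mem_singleton_iff]
  exact ⟨fun h => key w (q.getVert 1) h hadj0, fun h => h ▸ hadj0⟩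
open SimpleGraph Walk

variable {V : Type*} [DecidableEq V] {T : SimpleGraph V}

lemma getVert_one_mem_tail_support {u v : V} (p : T.Walk u v) (hp : ¬ p.Nil) :
    p.getVert 1 ∈ p.support.tail := by
  rw [← Walk.support_tail_of_not_nil p hp]
  exact p.tail.start_mem_support

lemma leaf_not_mem_path {ℓ j₀ : V} (hnb : T.neighborSet ℓ = {j₀})
    {u v : V} (hu : u ≠ ℓ) (hv : v ≠ ℓ) (p : T.Walk u v) (hp : p.IsPath) :
    ℓ ∉ p.support := by
  intro hmem
  have hsplit := p.take_spec hmem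
  set q := p.takeUntil ℓ hmem with hq
  set r := p.dropUntil ℓ hmem with hr
  have hqn : ¬ q.Nil := Walk.not_nil_of_ne hu
  have hrn : ¬ r.Nil := Walk.not_nil_of_ne (Ne.symm hv)
  have hqrn : ¬ q.reverse.Nil := Walk.not_nil_of_ne (Ne.symm hu)
  have hadj1 : T.Adj ℓ (q.reverse.getVert 1) := q.reverse.adj_snd hqrn
  have hadj2 : T.Adj ℓ (r.getVert 1) := r.adj_snd hrn
  have e1 : q.reverse.getVert 1 = j₀ := by
    have : q.reverse.getVert 1 ∈ T.neighborSet ℓ := hadj1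
    rwa [hnb] at this
  have e2 : r.getVert 1 = j₀ := by
    have : r.getVert 1 ∈ T.neighborSet ℓ := hadj2
    rwa [hnb] at this
  have hm1 : j₀ ∈ q.support := by
    rw [← e1]
    have h1 : q.reverse.getVert 1 ∈ q.reverse.support.tail := getVert_one_mem_tail_support _ hqrn
    have h2 : q.reverse.getVert 1 ∈ q.reverse.support := List.mem_of_mem_tail h1
    rwa [Walk.support_reverse, List.mem_reverse] at h2
  have hm2 : j₀ ∈ r.support.tail := e2 ▸ getVert_one_mem_tail_support _ hrn
  have hnodup : (q.support ++ r.support.tail).Nodup := by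
    rw [← Walk.support_append, hsplit]; exact hp.support_nodup
  rw [List.nodup_append] at hnodup
  exact hnodup.2.2 _ hm1 _ hm2 rfl
open SimpleGraph Walk

-- walk avoiding ℓ descends to reachability in the comap graph
lemma descend_reachable {n : ℕ} {T : SimpleGraph (Fin (n + 2))} {ℓ : Fin (n + 2)}
    {u v : Fin (n + 2)} (p : T.Walk u v) (hp : ∀ z ∈ p.support, z ≠ ℓ) :
    ∀ (u' v' : Fin (n + 1)), ℓ.succAbove u' = u → ℓ.succAbove v' = v →
      (T.comap ℓ.succAbove).Reachable u' v' := by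
  induction p with
  | nil =>
    intro u' v' hu hv
    have : u' = v' := Fin.succAbove_right_injective (by rw [hu, hv])
    exact this ▸ Reachable.refl u'
  | @cons x y z h q ih =>
    intro u' v' hu hv
    have hy : y ≠ ℓ := hp y (by simp)
    obtain ⟨y', hy'⟩ := Fin.exists_succAbove_eq hy
    have hadj : (T.comap ℓ.succAbove).Adj u' y' := by
      rw [SimpleGraph.comap_adj, hu, hy']; exact h
    exact (hadj.reachable).trans (ih (fun z hz => hp z (by simp [hz])) y' v' hy' hv)

lemma comap_isTree {n : ℕ} {T : SimpleGraph (Fin (n + 2))} (hT : T.IsTree)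
    {ℓ j₀ : Fin (n + 2)} (hnb : T.neighborSet ℓ = {j₀}) :
    (T.comap ℓ.succAbove).IsTree := by
  classical
  rw [SimpleGraph.isTree_iff_existsUnique_path]
  refine ⟨inferInstance, fun u' v' => ?_⟩
  have hinj : Function.Injective (ℓ.succAbove) := Fin.succAbove_right_injective
  set f : T.comap ℓ.succAbove →g T := ⟨ℓ.succAbove, fun h => h⟩ with hf
  -- existence
  obtain ⟨P, hP, -⟩ := hT.isConnected.exists_path_of_dist (ℓ.succAbove u') (ℓ.succAbove v')
  have hPl : ℓ ∉ P.support :=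
    leaf_not_mem_path hnb (Fin.succAbove_ne ℓ u') (Fin.succAbove_ne ℓ v') P hP
  obtain ⟨W⟩ := descend_reachable P (fun z hz hzl => hPl (by rwa [hzl] at hz)) u' v' rfl rfl
  refine ⟨W.toPath, W.toPath.2, ?_⟩
  intro q hq
  have huniq := hT.existsUnique_path (ℓ.succAbove u') (ℓ.succAbove v')
  have h1 : (q.map f).IsPath := Walk.map_isPath_of_injective hinj hq
  have h2 : ((W.toPath : (T.comap ℓ.succAbove).Walk u' v').map f).IsPath :=
    Walk.map_isPath_of_injective hinj W.toPath.2
  have := huniq.unique h1 h2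
  exact Walk.map_injective_of_injective hinj u' v' this
open SimpleGraph

lemma nbhd_sum_split {n : ℕ} {T : SimpleGraph (Fin (n + 2))} [DecidableRel T.Adj]
    (ℓ : Fin (n + 2)) (i' : Fin (n + 1)) (f : Fin (n + 2) → ℂ) :
    ∑ j ∈ T.neighborFinset (ℓ.succAbove i'), f j =
      (∑ j' ∈ (T.comap ℓ.succAbove).neighborFinset i', f (ℓ.succAbove j')) +
      (if T.Adj (ℓ.succAbove i') ℓ then f ℓ else 0) := by
  classical
  have hinj : Function.Injective (ℓ.succAbove) := Fin.succAbove_right_injective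
  rw [← Finset.sum_filter_add_sum_filter_not (T.neighborFinset (ℓ.succAbove i')) (· ≠ ℓ)]
  congr 1
  · rw [show (T.neighborFinset (ℓ.succAbove i')).filter (· ≠ ℓ) =
        ((T.comap ℓ.succAbove).neighborFinset i').image ℓ.succAbove from ?_]
    · rw [Finset.sum_image (fun x _ y _ h => hinj h)]
    · ext j
      simp only [Finset.mem_filter, mem_neighborFinset, Finset.mem_image, comap_adj]
      constructor
      · rintro ⟨hadj, hne⟩
        obtain ⟨j', rfl⟩ := Fin.exists_succAbove_eq hne
        exact ⟨j', hadj, rfl⟩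
      · rintro ⟨j', hadj, rfl⟩
        exact ⟨hadj, Fin.succAbove_ne ℓ j'⟩
  · simp only [not_ne_iff]
    rw [Finset.filter_eq']
    by_cases h : T.Adj (ℓ.succAbove i') ℓ
    · rw [if_pos (by rwa [mem_neighborFinset]), if_pos h, Finset.sum_singleton]
    · rw [if_neg (by rwa [mem_neighborFinset]), if_neg h, Finset.sum_empty]

lemma encard_biUnion_le {α β : Type*} (t : Finset α) (f : α → Set β) :
    (⋃ i ∈ t, f i).encard ≤ ∑ i ∈ t, (f i).encard := by
  classical
  induction t using Finset.induction with
  | empty => simp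
  | insert x s hx ih =>
    rw [Finset.sum_insert hx]
    refine le_trans (le_of_eq (by rw [Finset.set_biUnion_insert])) ?_
    exact le_trans (Set.encard_union_le _ _) (add_le_add_right ih _)
open Polynomial

lemma quad_roots_finset {A W : ℂ} (hA : A ≠ 0) :
    ∃ R : Finset ℂ, R.card ≤ 2 ∧ ∀ s : ℂ, A * s ^ 2 - W * s - A = 0 → s ∈ R := by
  set p : ℂ[X] := C A * X ^ 2 - C W * X - C A with hp
  have hpne : p ≠ 0 := by
    intro h
    have : p.coeff 2 = 0 := by rw [h]; simp
    rw [hp] at this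
    simp [coeff_sub, coeff_C_mul, coeff_X_pow, coeff_C] at this
    exact hA this
  have hdeg : p.natDegree ≤ 2 := by
    refine le_trans (natDegree_sub_le _ _) ?_
    simp only [max_le_iff]
    constructor
    · refine le_trans (natDegree_sub_le _ _) ?_
      simp only [max_le_iff]
      exact ⟨le_trans (natDegree_C_mul_le _ _) (by simp),
        le_trans (natDegree_C_mul_le _ _) (by simp)⟩
    · simp
  refine ⟨p.roots.toFinset, ?_, ?_⟩
  · exact le_trans (Multiset.toFinset_card_le _) (le_trans (Multiset.card_le_card
      (le_refl _)) (le_trans (p.card_roots' ) hdeg))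
  · intro s hs
    rw [Multiset.mem_toFinset, mem_roots hpne]
    simp only [IsRoot.def, hp, eval_sub, eval_mul, eval_C, eval_X, eval_pow]
    linear_combination hs
open SimpleGraph

theorem tree_aux (n : ℕ) :
    ∀ (T : SimpleGraph (Fin (n + 1))) [DecidableRel T.Adj], T.IsTree →
    ∀ (a : Fin (n + 1) → Fin (n + 1) → ℂ), (∀ i j, T.Adj i j → a i j ≠ 0) →
    ∀ (ω : Fin (n + 1) → ℂ),
    Set.encard {x : Fin (n + 1) → ℂ |
        x 0 = 1 ∧ (∀ i, x i ≠ 0) ∧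
        ∀ i : Fin (n + 1), i ≠ 0 →
          ω i - ∑ j ∈ T.neighborFinset i, a i j * (x i / x j - x j / x i) = 0} ≤
      2 ^ n := by
  induction n with
  | zero =>
    intro T _ hT a ha ω
    have hsub : {x : Fin 1 → ℂ |
        x 0 = 1 ∧ (∀ i, x i ≠ 0) ∧
        ∀ i : Fin 1, i ≠ 0 →
          ω i - ∑ j ∈ T.neighborFinset i, a i j * (x i / x j - x j / x i) = 0} ⊆
        {fun _ => (1 : ℂ)} := by
      rintro x ⟨h0, -, -⟩
      have : x = fun _ => (1 : ℂ) := by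
        funext i
        have : i = 0 := Subsingleton.elim i 0
        rw [this, h0]
      simp [this]
    calc _ ≤ ({fun _ => (1:ℂ)} : Set (Fin 1 → ℂ)).encard := Set.encard_mono hsub
    _ ≤ 2 ^ 0 := by rw [Set.encard_singleton]; norm_num
  | succ n IH =>
    intro T _ hT a ha ω
    set S := {x : Fin (n + 1 + 1) → ℂ |
        x 0 = 1 ∧ (∀ i, x i ≠ 0) ∧
        ∀ i : Fin (n + 1 + 1), i ≠ 0 →
          ω i - ∑ j ∈ T.neighborFinset i, a i j * (x i / x j - x j / x i) = 0} with hS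
    obtain ⟨ℓ, hℓ0, j₀, hnb⟩ := exists_leaf hT 0 ⟨⟨1, by omega⟩, by simp [Fin.ext_iff]⟩
    have hadjℓ : T.Adj ℓ j₀ := by
      have : j₀ ∈ T.neighborSet ℓ := by rw [hnb]; exact Set.mem_singleton _
      exact this
    have hj₀ℓ : j₀ ≠ ℓ := hadjℓ.ne'
    have hAdj_iff : ∀ w, T.Adj ℓ w ↔ w = j₀ := by
      intro w
      rw [← SimpleGraph.mem_neighborSet, hnb, Set.mem_singleton_iff]
    set emb : Fin (n + 1) → Fin (n + 1 + 1) := ℓ.succAbove with hembdef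
    have hinj : Function.Injective emb := Fin.succAbove_right_injective
    have hemb0 : emb 0 = 0 := by
      rw [hembdef]
      rw [Fin.succAbove_of_castSucc_lt ℓ 0 (by
        rw [Fin.castSucc_zero]
        exact Fin.pos_of_ne_zero hℓ0)]
      exact Fin.castSucc_zero
    set T' : SimpleGraph (Fin (n + 1)) := T.comap emb with hT'def
    have hT' : T'.IsTree := comap_isTree hT hnb
    set a' : Fin (n + 1) → Fin (n + 1) → ℂ := fun i' j' => a (emb i') (emb j') with ha'def
    have ha' : ∀ i' j', T'.Adj i' j' → a' i' j' ≠ 0 := fun i' j' h => ha _ _ h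
    set A := a ℓ j₀ with hAdef
    have hA : A ≠ 0 := ha ℓ j₀ hadjℓ
    obtain ⟨R, hRcard, hR⟩ := quad_roots_finset (W := ω ℓ) hA
    set ω' : ℂ → Fin (n + 1) → ℂ := fun s i' =>
      ω (emb i') - (if T.Adj (emb i') ℓ then a (emb i') ℓ * (1 / s - s) else 0) with hω'def
    set S' : ℂ → Set (Fin (n + 1) → ℂ) := fun s =>
      {x' : Fin (n + 1) → ℂ |
        x' 0 = 1 ∧ (∀ i', x' i' ≠ 0) ∧
        ∀ i' : Fin (n + 1), i' ≠ 0 →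
          ω' s i' - ∑ j' ∈ T'.neighborFinset i',
            a' i' j' * (x' i' / x' j' - x' j' / x' i') = 0} with hS'def
    have hIH : ∀ s : ℂ, (S' s).encard ≤ 2 ^ n := fun s => IH T' hT' a' ha' (ω' s)
    set Φ : (Fin (n + 1 + 1) → ℂ) → ℂ × (Fin (n + 1) → ℂ) :=
      fun x => (x ℓ / x j₀, fun i' => x (emb i')) with hΦdef
    have hnf : T.neighborFinset ℓ = {j₀} := by
      ext w
      rw [mem_neighborFinset, hAdj_iff, Finset.mem_singleton]
    -- key membership fact
    have hkey : ∀ x ∈ S, (x ℓ / x j₀) ∈ R ∧ (fun i' => x (emb i')) ∈ S' (x ℓ / x j₀) := by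
      rintro x ⟨h0, hnz, heq⟩
      have hsℓ := heq ℓ hℓ0
      rw [hnf, Finset.sum_singleton] at hsℓ
      set s := x ℓ / x j₀ with hsdef
      have hs0 : s ≠ 0 := div_ne_zero (hnz ℓ) (hnz j₀)
      have hinv : x j₀ / x ℓ = 1 / s := by
        rw [hsdef, one_div_div]
      rw [hinv] at hsℓ
      have hcan : s * (1 / s) = 1 := by field_simp
      have hsq : A * s ^ 2 - ω ℓ * s - A = 0 := by
        linear_combination (-s) * hsℓ + A * hcan
      refine ⟨hR s hsq, ?_, fun i' => hnz _, ?_⟩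
      · show x (emb 0) = 1
        rw [hemb0, h0]
      · intro i' hi'0
        have hine : emb i' ≠ 0 := by
          rw [← hemb0]
          exact fun h => hi'0 (hinj h)
        have horig := heq (emb i') hine
        rw [nbhd_sum_split ℓ i' (fun j => a (emb i') j * (x (emb i') / x j - x j / x (emb i')))]
          at horig
        have hite : (if T.Adj (emb i') ℓ then
              a (emb i') ℓ * (x (emb i') / x ℓ - x ℓ / x (emb i')) else 0) =
            (if T.Adj (emb i') ℓ then a (emb i') ℓ * (1 / s - s) else 0) := by
          by_cases hc : T.Adj (emb i') ℓ
          · rw [if_pos hc, if_pos hc]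
            have he : emb i' = j₀ := (hAdj_iff _).1 hc.symm
            rw [he, hinv]
          · rw [if_neg hc, if_neg hc]
        show ω' s i' - _ = 0
        rw [hω'def]
        linear_combination horig + hite
    -- injectivity of Φ on S
    have hinjΦ : Set.InjOn Φ S := by
      rintro x hx y hy hxy
      obtain ⟨-, hnzx, -⟩ := hx
      obtain ⟨-, hnzy, -⟩ := hy
      have h1 : x ℓ / x j₀ = y ℓ / y j₀ := congrArg Prod.fst hxy
      have h2 : ∀ i', x (emb i') = y (emb i') := fun i' =>
        congrFun (congrArg Prod.snd hxy) i'
      funext i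
      by_cases hiℓ : i = ℓ
      · subst hiℓ
        obtain ⟨j₀', hj₀'⟩ := Fin.exists_succAbove_eq hj₀ℓ
        have hxj : x j₀ = y j₀ := by rw [← hj₀']; exact h2 j₀'
        have hx' : x i = (x i / x j₀) * x j₀ := (div_mul_cancel₀ _ (hnzx j₀)).symm
        have hy' : y i = (y i / y j₀) * y j₀ := (div_mul_cancel₀ _ (hnzy j₀)).symm
        rw [hx', hy', h1, hxj]
      · obtain ⟨i', rfl⟩ := Fin.exists_succAbove_eq hiℓ
        exact h2 i'
    -- the image is inside the union
    have hsub : Φ '' S ⊆ ⋃ s ∈ R, ({s} : Set ℂ) ×ˢ S' s := by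
      rintro - ⟨x, hx, rfl⟩
      obtain ⟨hmem, hmem'⟩ := hkey x hx
      refine Set.mem_biUnion hmem ?_
      exact ⟨rfl, hmem'⟩
    calc S.encard = (Φ '' S).encard := (hinjΦ.encard_image).symm
      _ ≤ (⋃ s ∈ R, ({s} : Set ℂ) ×ˢ S' s).encard := Set.encard_mono hsub
      _ ≤ ∑ s ∈ R, (({s} : Set ℂ) ×ˢ S' s).encard := encard_biUnion_le R _
      _ ≤ ∑ _s ∈ R, (2 ^ n : ℕ∞) := by
          refine Finset.sum_le_sum fun s _ => ?_
          rw [Set.singleton_prod, ((Prod.mk_right_injective s).injOn).encard_image]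
          exact hIH s
      _ ≤ 2 ^ (n + 1) := by
          rw [Finset.sum_const, nsmul_eq_mul]
          calc (R.card : ℕ∞) * 2 ^ n ≤ 2 * 2 ^ n := by
                refine mul_le_mul_left ?_ _
                exact_mod_cast (Nat.cast_le (α := ℕ∞)).2 hRcard
            _ = 2 ^ (n + 1) := by ring

/-- Let `T` be a tree on `{0,1,…,n}`, let `a i j` be nonzero complex weights on the (ordered)
edges of `T`, and let `ω_1,…,ω_n ∈ ℂ`.  Then the algebraic Kuramoto system
`ω_i - ∑_{j ∈ N_T(i)} a_{ij}(x_i/x_j - x_j/x_i) = 0`, `i = 1,…,n` (with `x_0 = 1`), has at most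
`2^n` solutions `x ∈ (ℂ*)^n`. -/
theorem tree_system_upper_bound (n : ℕ) (T : SimpleGraph (Fin (n + 1)))
    [DecidableRel T.Adj] (hT : T.IsTree)
    (a : Fin (n + 1) → Fin (n + 1) → ℂ) (ha : ∀ i j, T.Adj i j → a i j ≠ 0)
    (ω : Fin (n + 1) → ℂ) :
    Set.encard {x : Fin (n + 1) → ℂ |
        x 0 = 1 ∧ (∀ i, x i ≠ 0) ∧
        ∀ i : Fin (n + 1), i ≠ 0 →
          ω i - ∑ j ∈ T.neighborFinset i, a i j * (x i / x j - x j / x i) = 0} ≤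
      2 ^ n :=
  tree_aux n T hT a ha ω
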